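/- For every integer M ≥ 1, the number of elements of the weight set L_M equals (M² + 3M)/6 if M ≡ 0 (mod 3), and (M² + 3M + 2)/6 otherwise; consequently 2·|L_M| = |H_M|, where H_M is the honeycomb point set. -/

import Mathlib

open Finset

/-- The point set `F_{P,M}`: triples of nonnegative integers summing to `M`. -/
def FPM (M : ℕ) : Finset (ℕ × ℕ × ℕ) :=
  (Finset.range (M+1) ×ˢ Finset.range (M+1) ×ˢ Finset.range (M+1)).filter
    (fun s => s.1 + s.2.1 + s.2.2 = M)

/-- The point set `F_{Q,M}`: triples of `F_{P,M}` with `s1 + 2 s2 ≡ 0 (mod 3)`. -/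
def FQM (M : ℕ) : Finset (ℕ × ℕ × ℕ) :=
  (FPM M).filter (fun s => (s.2.1 + 2 * s.2.2) % 3 = 0)

/-- The honeycomb point set `H_M = F_{P,M} \ F_{Q,M}`. -/
def HM (M : ℕ) : Finset (ℕ × ℕ × ℕ) := FPM M \ FQM M

/-- The interior point set `F̃_{P,M}`: triples of strictly positive integers summing to `M`. -/
def FPMint (M : ℕ) : Finset (ℕ × ℕ × ℕ) :=
  (FPM M).filter (fun s => 0 < s.1 ∧ 0 < s.2.1 ∧ 0 < s.2.2)

/-- The interior point set `F̃_{Q,M}`. -/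
def FQMint (M : ℕ) : Finset (ℕ × ℕ × ℕ) :=
  (FPMint M).filter (fun s => (s.2.1 + 2 * s.2.2) % 3 = 0)

/-- The interior honeycomb point set `H̃_M = F̃_{P,M} \ F̃_{Q,M}`. -/
def HMint (M : ℕ) : Finset (ℕ × ℕ × ℕ) := FPMint M \ FQMint M

/-- The weight set `L_M ⊆ Λ_{Q,M}`. -/
def LM (M : ℕ) : Finset (ℕ × ℕ × ℕ) :=
  (FPM M).filter (fun l => (l.2.1 < l.1 ∧ l.2.2 < l.1) ∨ (l.1 = l.2.1 ∧ l.2.2 < l.1))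

/-- The interior weight set `L̃_M`: elements of `L_M` with all coordinates positive. -/
def LMint (M : ℕ) : Finset (ℕ × ℕ × ℕ) :=
  (LM M).filter (fun l => 0 < l.1 ∧ 0 < l.2.1 ∧ 0 < l.2.2)

/-- A triple `s ∈ F_{P,M}` is identified with the point `(s1/M, s2/M)`. -/
noncomputable def pt (M : ℕ) (s : ℕ × ℕ × ℕ) : ℝ × ℝ :=
  ((s.2.1 : ℝ) / M, (s.2.2 : ℝ) / M)

/-- The Weyl group orbit of the weight `λ` (ordered list, in `ω`-coordinates). -/
def orbit (l : ℕ × ℕ × ℕ) : List (ℤ × ℤ) :=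
  [(2*(l.2.1:ℤ)+l.2.2, (l.2.1:ℤ)+2*l.2.2),
   (-(l.2.1:ℤ)+l.2.2, (l.2.1:ℤ)+2*l.2.2),
   (-(l.2.1:ℤ)-2*l.2.2, (l.2.1:ℤ)-l.2.2),
   (-(l.2.1:ℤ)-2*l.2.2, -2*(l.2.1:ℤ)-l.2.2),
   (-(l.2.1:ℤ)+l.2.2, -2*(l.2.1:ℤ)-l.2.2),
   (2*(l.2.1:ℤ)+l.2.2, (l.2.1:ℤ)-l.2.2)]

/-- The signs `(+,−,+,−,+,−)` attached to the six orbit points for `S`-functions. -/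
def orbitSigns : List ℤ := [1, -1, 1, -1, 1, -1]

/-- The Weyl orbit `C`-function `Φ_λ` of `A₂`. -/
noncomputable def PhiC (l : ℕ × ℕ × ℕ) (x : ℝ × ℝ) : ℂ :=
  ((orbit l).map (fun p =>
    Complex.exp (2 * Real.pi * Complex.I / 3 * ((p.1 : ℂ) * (x.1 : ℂ) + (p.2 : ℂ) * (x.2 : ℂ))))).sum

/-- The Weyl orbit `S`-function `φ_λ` of `A₂`. -/
noncomputable def PhiS (l : ℕ × ℕ × ℕ) (x : ℝ × ℝ) : ℂ :=
  ((orbitSigns.zip (orbit l)).map (fun p => (p.1 : ℂ) *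
    Complex.exp (2 * Real.pi * Complex.I / 3 * ((p.2.1 : ℂ) * (x.1 : ℂ) + (p.2.2 : ℂ) * (x.2 : ℂ))))).sum

/-- The Hartley kernel `cas t = cos t + sin t`. -/
noncomputable def cas (t : ℝ) : ℝ := Real.cos t + Real.sin t

/-- The Hartley `C`-function `ζ¹_λ` of `A₂`. -/
noncomputable def zetaC (l : ℕ × ℕ × ℕ) (x : ℝ × ℝ) : ℝ :=
  ((orbit l).map (fun p => cas (2 * Real.pi / 3 * ((p.1 : ℝ) * x.1 + (p.2 : ℝ) * x.2)))).sum

/-- The Hartley `S`-function `ζ^e_λ` of `A₂`. -/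
noncomputable def zetaS (l : ℕ × ℕ × ℕ) (x : ℝ × ℝ) : ℝ :=
  ((orbitSigns.zip (orbit l)).map (fun p => (p.1 : ℝ) *
    cas (2 * Real.pi / 3 * ((p.2.1 : ℝ) * x.1 + (p.2.2 : ℝ) * x.2)))).sum

/-- The number of zero entries of a triple. -/
def zeroCount (s : ℕ × ℕ × ℕ) : ℕ :=
  (if s.1 = 0 then 1 else 0) + (if s.2.1 = 0 then 1 else 0) + (if s.2.2 = 0 then 1 else 0)

/-- The discrete function `ε`: values `6, 3, 1` for zero, one, two zero entries. -/
def epsF (s : ℕ × ℕ × ℕ) : ℕ :=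
  if zeroCount s = 0 then 6 else if zeroCount s = 1 then 3 else 1

/-- The discrete function `h_M`: values `1, 2, 6` for zero, one, two zero entries. -/
def hMF (l : ℕ × ℕ × ℕ) : ℕ :=
  if zeroCount l = 0 then 1 else if zeroCount l = 1 then 2 else 6

/-- The elements `γ₀ = id`, `γ₁`, `γ₂` of `Γ_M` acting as cyclic permutations of Kac
coordinates: `γ₁[λ0,λ1,λ2] = [λ2,λ0,λ1]`, `γ₂[λ0,λ1,λ2] = [λ1,λ2,λ0]`. -/
def gam (k : Fin 3) (l : ℕ × ℕ × ℕ) : ℕ × ℕ × ℕ :=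
  if k = 0 then l else if k = 1 then (l.2.2, l.1, l.2.1) else (l.2.1, l.2.2, l.1)

/-- The normalization function `μ` of a triple of extension coefficients. -/
noncomputable def muNorm (a b c : ℂ) : ℝ :=
  ‖a‖ ^ 2 + ‖b‖ ^ 2 + ‖c‖ ^ 2
    - (a * starRingEnd ℂ b + a * starRingEnd ℂ c + b * starRingEnd ℂ c).re

/-- The intertwining function `β` of two triples of extension coefficients. -/
noncomputable def betaFun (a b c a' b' c' : ℂ) : ℂ :=
  2 * (a * starRingEnd ℂ a' + b * starRingEnd ℂ b' + c * starRingEnd ℂ c')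
    - a * (starRingEnd ℂ b' + starRingEnd ℂ c')
    - b * (starRingEnd ℂ a' + starRingEnd ℂ c')
    - c * (starRingEnd ℂ a' + starRingEnd ℂ b')

/-- The extended `C`-function `Φ^t_λ` with extension coefficients `μ0, μ1, μ2`. -/
noncomputable def PhiCExt (μ0 μ1 μ2 : ℂ) (l : ℕ × ℕ × ℕ) (x : ℝ × ℝ) : ℂ :=
  μ0 * PhiC l x + μ1 * PhiC (gam 1 l) x + μ2 * PhiC (gam 2 l) x

/-- The extended `S`-function `φ^t_λ` with extension coefficients `μ0, μ1, μ2`. -/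
noncomputable def PhiSExt (μ0 μ1 μ2 : ℂ) (l : ℕ × ℕ × ℕ) (x : ℝ × ℝ) : ℂ :=
  μ0 * PhiS l x + μ1 * PhiS (gam 1 l) x + μ2 * PhiS (gam 2 l) x

/-- The extended Hartley `C`-function `ζ^{1,t}_λ` with extension coefficients `μ0, μ1, μ2`. -/
noncomputable def zetaCExt (μ0 μ1 μ2 : ℂ) (l : ℕ × ℕ × ℕ) (x : ℝ × ℝ) : ℂ :=
  μ0 * (zetaC l x : ℂ) + μ1 * (zetaC (gam 1 l) x : ℂ) + μ2 * (zetaC (gam 2 l) x : ℂ)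

/-- The extended Hartley `S`-function `ζ^{e,t}_λ` with extension coefficients `μ0, μ1, μ2`. -/
noncomputable def zetaSExt (μ0 μ1 μ2 : ℂ) (l : ℕ × ℕ × ℕ) (x : ℝ × ℝ) : ℂ :=
  μ0 * (zetaS l x : ℂ) + μ1 * (zetaS (gam 1 l) x : ℂ) + μ2 * (zetaS (gam 2 l) x : ℂ)

lemma mem_FPM {M : ℕ} {s : ℕ × ℕ × ℕ} : s ∈ FPM M ↔ s.1 + s.2.1 + s.2.2 = M := by
  simp only [FPM, mem_filter, mem_product, mem_range]
  omega

lemma mem_LM {M : ℕ} {s : ℕ × ℕ × ℕ} :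
    s ∈ LM M ↔ s.1 + s.2.1 + s.2.2 = M ∧
      ((s.2.1 < s.1 ∧ s.2.2 < s.1) ∨ (s.1 = s.2.1 ∧ s.2.2 < s.1)) := by
  simp [LM, mem_filter, mem_FPM]

lemma mem_HM {M : ℕ} {s : ℕ × ℕ × ℕ} :
    s ∈ HM M ↔ s.1 + s.2.1 + s.2.2 = M ∧ (s.2.1 + 2 * s.2.2) % 3 ≠ 0 := by
  simp only [HM, FQM, mem_sdiff, mem_filter, mem_FPM]
  tauto

lemma shift_inj : Function.Injective (fun s : ℕ × ℕ × ℕ => (s.1+1, s.2.1+1, s.2.2+1)) := by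
  rintro ⟨a,b,c⟩ ⟨x,y,z⟩ h
  simp only [Prod.mk.injEq] at h
  simp [Prod.ext_iff]; omega

lemma count_not_mod (k : ℕ) (n : ℕ) :
    ((Finset.range n).filter (fun x => (x + k) % 3 ≠ 0)).card
      = n - ((n + k + 2)/3 - (k+2)/3) := by
  induction n with
  | zero => simp
  | succ n ih =>
    rw [Finset.range_add_one, Finset.filter_insert]
    split_ifs with h
    · rw [Finset.card_insert_of_notMem (by simp)]
      omega
    · omega


lemma LM_interior (K : ℕ) :
    (LM (K+3)).filter (fun s => 0 < s.1 ∧ 0 < s.2.1 ∧ 0 < s.2.2)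
      = (LM K).image (fun s => (s.1+1, s.2.1+1, s.2.2+1)) := by
  ext ⟨a,b,c⟩
  simp only [mem_filter, mem_LM, Finset.mem_image, Prod.mk.injEq]
  constructor
  · rintro ⟨⟨hsum, hcond⟩, ha, hb, hc⟩
    refine ⟨(a-1, b-1, c-1), ⟨?_, ?_⟩, ?_, ?_, ?_⟩ <;> dsimp only <;> omega
  · rintro ⟨⟨x,y,z⟩, ⟨hsum, hcond⟩, hx, hy, hz⟩
    dsimp only at hsum hcond hx hy hz
    refine ⟨⟨by omega, ?_⟩, by omega, by omega, by omega⟩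
    omega


lemma LM_boundary (K : ℕ) :
    ((LM (K+3)).filter (fun s => ¬(0 < s.1 ∧ 0 < s.2.1 ∧ 0 < s.2.2))).card = K+3 := by
  have h : ((LM (K+3)).filter (fun s => ¬(0 < s.1 ∧ 0 < s.2.1 ∧ 0 < s.2.2))).card
      = (Finset.range (K+3)).card := by
    apply Finset.card_nbij' (i := fun s => if s.2.2 = 0 then s.2.1 else (K+3) - s.2.2)
      (j := fun k => if 2*k ≤ K+3 then (K+3-k, k, 0) else (k, 0, K+3-k))
    · rintro ⟨a,b,c⟩ hm
      simp only [Finset.mem_coe, mem_filter, mem_LM] at hm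
      simp only [Finset.mem_coe, mem_range]
      split_ifs <;> omega
    · intro k hk
      simp only [Finset.mem_coe, mem_range] at hk
      dsimp only
      split_ifs with h1 <;> simp only [Finset.mem_coe, mem_filter, mem_LM] <;> omega
    · rintro ⟨a,b,c⟩ hm
      simp only [Finset.mem_coe, mem_filter, mem_LM] at hm
      dsimp only
      rcases eq_or_ne c 0 with h1 | h1
      · rw [if_pos h1, if_pos (show 2*b ≤ K+3 by omega)]
        simp only [Prod.mk.injEq]
        refine ⟨by omega, trivial, by omega⟩
      · rw [if_neg h1, if_neg (show ¬2*(K+3-c) ≤ K+3 by omega)]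
        simp only [Prod.mk.injEq]
        refine ⟨by omega, by omega, by omega⟩
    · intro k hk
      simp only [Finset.mem_coe, mem_range] at hk
      dsimp only
      rcases le_or_gt (2*k) (K+3) with h1 | h1
      · rw [if_pos h1, if_pos rfl]
      · rw [if_neg (show ¬2*k ≤ K+3 by omega)]
        dsimp only
        rw [if_neg (show ¬(K+3-k = 0) by omega)]
        omega
  rw [h, Finset.card_range]

lemma stepL (K : ℕ) : (LM (K+3)).card = (LM K).card + (K+3) := by
  have h := Finset.card_filter_add_card_filter_not
    (s := LM (K+3)) (p := fun s => 0 < s.1 ∧ 0 < s.2.1 ∧ 0 < s.2.2)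
  rw [LM_interior, Finset.card_image_of_injective _ shift_inj, LM_boundary] at h
  omega

lemma HM_interior (K : ℕ) :
    (HM (K+3)).filter (fun s => 0 < s.1 ∧ 0 < s.2.1 ∧ 0 < s.2.2)
      = (HM K).image (fun s => (s.1+1, s.2.1+1, s.2.2+1)) := by
  ext ⟨a,b,c⟩
  simp only [mem_filter, mem_HM, Finset.mem_image, Prod.mk.injEq]
  constructor
  · rintro ⟨⟨hsum, hmod⟩, ha, hb, hc⟩
    refine ⟨(a-1, b-1, c-1), ⟨?_, ?_⟩, ?_, ?_, ?_⟩ <;> dsimp only <;> omega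
  · rintro ⟨⟨x,y,z⟩, ⟨hsum, hmod⟩, hx, hy, hz⟩
    dsimp only at hsum hmod hx hy hz
    refine ⟨⟨by omega, by omega⟩, by omega, by omega, by omega⟩

lemma HM_boundary (K : ℕ) :
    ((HM (K+3)).filter (fun s => ¬(0 < s.1 ∧ 0 < s.2.1 ∧ 0 < s.2.2))).card = 2*(K+3) := by
  set N := K + 3 with hN
  set B := (HM N).filter (fun s => ¬(0 < s.1 ∧ 0 < s.2.1 ∧ 0 < s.2.2)) with hB
  have hsplit1 := Finset.card_filter_add_card_filter_not
    (s := B) (p := fun s => s.2.2 = 0)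
  have hsplit2 := Finset.card_filter_add_card_filter_not
    (s := B.filter (fun s => ¬ s.2.2 = 0)) (p := fun s => s.2.1 = 0)
  -- E1 : c = 0
  have hE1 : (B.filter (fun s => s.2.2 = 0)).card
      = ((Finset.range (N+1)).filter (fun x => (x + 0) % 3 ≠ 0)).card := by
    apply Finset.card_nbij' (i := fun s => s.2.1) (j := fun b => (N - b, b, 0))
    · rintro ⟨a,b,c⟩ hm
      simp only [Finset.mem_coe, hB, mem_filter, mem_HM] at hm
      simp only [Finset.mem_coe, mem_filter, mem_range]
      omega
    · intro b hb
      simp only [Finset.mem_coe, mem_filter, mem_range] at hb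
      simp only [Finset.mem_coe, hB, mem_filter, mem_HM]
      refine ⟨⟨⟨by omega, by omega⟩, by omega⟩, trivial⟩
    · rintro ⟨a,b,c⟩ hm
      simp only [Finset.mem_coe, hB, mem_filter, mem_HM] at hm
      simp only [Prod.mk.injEq]
      refine ⟨by omega, trivial, by omega⟩
    · intro b hb
      rfl
  -- E2 : c ≠ 0, b = 0
  have hE2 : (((B.filter (fun s => ¬ s.2.2 = 0)).filter (fun s => s.2.1 = 0))).card
      = ((Finset.range N).filter (fun x => (x + 1) % 3 ≠ 0)).card := by
    apply Finset.card_nbij' (i := fun s => s.2.2 - 1) (j := fun x => (N - (x+1), 0, x+1))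
    · rintro ⟨a,b,c⟩ hm
      simp only [Finset.mem_coe, hB, mem_filter, mem_HM] at hm
      simp only [Finset.mem_coe, mem_filter, mem_range]
      omega
    · intro x hx
      simp only [Finset.mem_coe, mem_filter, mem_range] at hx
      simp only [Finset.mem_coe, hB, mem_filter, mem_HM]
      refine ⟨⟨⟨⟨by omega, by omega⟩, by omega⟩, by omega⟩, trivial⟩
    · rintro ⟨a,b,c⟩ hm
      simp only [Finset.mem_coe, hB, mem_filter, mem_HM] at hm
      simp only [Prod.mk.injEq]
      refine ⟨by omega, by omega, by omega⟩
    · intro x hx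
      dsimp only
      omega
  -- E3 : c ≠ 0, b ≠ 0 (so a = 0)
  have hE3 : (((B.filter (fun s => ¬ s.2.2 = 0)).filter (fun s => ¬ s.2.1 = 0))).card
      = ((Finset.range (N-1)).filter (fun x => (x + (N+1)) % 3 ≠ 0)).card := by
    apply Finset.card_nbij' (i := fun s => s.2.2 - 1) (j := fun x => (0, N - (x+1), x+1))
    · rintro ⟨a,b,c⟩ hm
      simp only [Finset.mem_coe, hB, mem_filter, mem_HM] at hm
      simp only [Finset.mem_coe, mem_filter, mem_range]
      omega
    · intro x hx
      simp only [Finset.mem_coe, mem_filter, mem_range] at hx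
      simp only [Finset.mem_coe, hB, mem_filter, mem_HM]
      refine ⟨⟨⟨⟨by omega, by omega⟩, by omega⟩, by omega⟩, by omega⟩
    · rintro ⟨a,b,c⟩ hm
      simp only [Finset.mem_coe, hB, mem_filter, mem_HM] at hm
      simp only [Prod.mk.injEq]
      refine ⟨by omega, by omega, by omega⟩
    · intro x hx
      dsimp only
      omega
  rw [hE1, count_not_mod 0 (N+1)] at hsplit1
  rw [hE2, count_not_mod 1 N, hE3, count_not_mod (N+1) (N-1)] at hsplit2
  omega

lemma stepH (K : ℕ) : (HM (K+3)).card = (HM K).card + 2*(K+3) := by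
  have h := Finset.card_filter_add_card_filter_not
    (s := HM (K+3)) (p := fun s => 0 < s.1 ∧ 0 < s.2.1 ∧ 0 < s.2.2)
  rw [HM_interior, Finset.card_image_of_injective _ shift_inj, HM_boundary] at h
  omega

lemma main_nat (M : ℕ) :
    6 * (LM M).card = (if M % 3 = 0 then M^2 + 3*M else M^2 + 3*M + 2)
    ∧ 2 * (LM M).card = (HM M).card := by
  induction M using Nat.strong_induction_on with
  | _ M ih =>
    rcases Nat.lt_or_ge M 3 with hM3 | hM3
    · interval_cases M <;> decide
    · obtain ⟨K, rfl⟩ : ∃ K, M = K + 3 := ⟨M - 3, by omega⟩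
      obtain ⟨h1, h2⟩ := ih K (by omega)
      have hL := stepL K
      have hH := stepH K
      have hm : (K+3) % 3 = K % 3 := by omega
      have hsq : (K+3)^2 = K^2 + 6*K + 9 := by ring
      constructor
      · rw [hL, hm, hsq]
        split_ifs at h1 ⊢ <;> omega
      · rw [hL, hH]
        omega


/-- counting formula for the weight set `L_M` and `2·|L_M| = |H_M|`. -/
theorem card_LM (M : ℕ) (hM : 1 ≤ M) :
    (((LM M).card : ℚ) =
      if M % 3 = 0 then ((M : ℚ)^2 + 3*M) / 6 else ((M : ℚ)^2 + 3*M + 2) / 6)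
    ∧ 2 * (LM M).card = (HM M).card := by
  obtain ⟨h1, h2⟩ := main_nat M
  refine ⟨?_, h2⟩
  split_ifs at h1 ⊢ with h
  · have : (6 : ℚ) * (LM M).card = (M:ℚ)^2 + 3*M := by exact_mod_cast h1
    linarith
  · have : (6 : ℚ) * (LM M).card = (M:ℚ)^2 + 3*M + 2 := by exact_mod_cast h1
    linarith
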